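/- For i ∈ ℤ, let A_i denote the annulus {x ∈ ℝ² : 2^{i−1} ≤ ‖x‖ < 2^i}, where ‖·‖ is the Euclidean norm. There exists a finite constant C such that for all α > 0, all i, j ∈ ℤ, and all Lebesgue measurable sets E, F ⊂ ℝ², ∫_{ℝ²} ∫_{ℝ²} χ_{{|s₁t₂ − s₂t₁| ≤ α}}(s,t) · χ_{E ∩ A_i}(s) χ_{F ∩ A_j}(t) ds dt ≤ C α · min{ 2^{i−j} |F ∩ A_j|, 2^{j−i} |E ∩ A_i| }. -/

import Mathlib

open MeasureTheory Set
open scoped ENNReal NNReal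

lemma vol_rect (a b : ℝ) :
    volume {u : EuclideanSpace ℝ (Fin 2) | |u 0| ≤ a ∧ |u 1| ≤ b}
      = ENNReal.ofReal (2 * a) * ENNReal.ofReal (2 * b) := by
  have hmp := EuclideanSpace.volume_preserving_symm_measurableEquiv_toLp (Fin 2)
  have hA : MeasurableSet (Set.pi univ ![Icc (-a) a, Icc (-b) b]) :=
    MeasurableSet.univ_pi (fun i => by fin_cases i <;> exact measurableSet_Icc)
  have key := hmp.measure_preimage hA.nullMeasurableSet
  have hpre : (MeasurableEquiv.toLp 2 (Fin 2 → ℝ)).symm ⁻¹' (Set.pi univ ![Icc (-a) a, Icc (-b) b])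
      = {u : EuclideanSpace ℝ (Fin 2) | |u 0| ≤ a ∧ |u 1| ≤ b} := by
    ext u
    simp [Fin.forall_fin_two, abs_le]
  rw [hpre] at key
  rw [key, volume_pi_pi, Fin.prod_univ_two]
  simp [Real.volume_Icc, two_mul, sub_neg_eq_add]

lemma det_aux (v : EuclideanSpace ℝ (Fin 2)) :
    LinearMap.det (Matrix.toEuclideanLin !![-(v 1), v 0; v 0, v 1]) = -(v 0 ^ 2 + v 1 ^ 2) := by
  rw [← LinearMap.det_toMatrix (PiLp.basisFun 2 ℝ (Fin 2))]
  have : (LinearMap.toMatrix (PiLp.basisFun 2 ℝ (Fin 2)) (PiLp.basisFun 2 ℝ (Fin 2))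
      (Matrix.toEuclideanLin !![-(v 1), v 0; v 0, v 1])) = !![-(v 1), v 0; v 0, v 1] := by
    ext i j
    simp [LinearMap.toMatrix_apply, Matrix.toEuclideanLin_apply, PiLp.basisFun_apply,
      Matrix.mulVec_single]
  rw [this, Matrix.det_fin_two_of]
  ring

lemma inner_aux (v t : EuclideanSpace ℝ (Fin 2)) : |v 0 * t 0 + v 1 * t 1| ≤ ‖v‖ * ‖t‖ := by
  have h : (inner ℝ v t : ℝ) = v 0 * t 0 + v 1 * t 1 := by
    simp [PiLp.inner_apply, Fin.sum_univ_two]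
    ring
  calc |v 0 * t 0 + v 1 * t 1| = |(inner ℝ v t : ℝ)| := by rw [h]
    _ ≤ ‖v‖ * ‖t‖ := abs_real_inner_le_norm v t

lemma norm_sq_aux (v : EuclideanSpace ℝ (Fin 2)) : v 0 ^ 2 + v 1 ^ 2 = ‖v‖ ^ 2 := by
  rw [← real_inner_self_eq_norm_sq]
  simp only [PiLp.inner_apply, Fin.sum_univ_two, RCLike.inner_apply, conj_trivial]
  ring

lemma strip_vol (v : EuclideanSpace ℝ (Fin 2)) (hv : 0 < ‖v‖) (α R : ℝ) (hα : 0 ≤ α) (hR : 0 ≤ R) :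
    volume {t : EuclideanSpace ℝ (Fin 2) | |v 0 * t 1 - v 1 * t 0| ≤ α ∧ ‖t‖ ≤ R}
      ≤ ENNReal.ofReal (4 * α * R / ‖v‖) := by
  set f := Matrix.toEuclideanLin !![-(v 1), v 0; v 0, v 1] with hf
  have hdet : LinearMap.det f = -(‖v‖ ^ 2) := by rw [hf, det_aux, norm_sq_aux]
  have hdet0 : LinearMap.det f ≠ 0 := by
    rw [hdet]; exact neg_ne_zero.mpr (by positivity)
  have hft : ∀ t : EuclideanSpace ℝ (Fin 2),
      f t 0 = v 0 * t 1 - v 1 * t 0 ∧ f t 1 = v 0 * t 0 + v 1 * t 1 := by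
    intro t
    constructor <;>
    · show (Matrix.toEuclideanLin !![-(v 1), v 0; v 0, v 1] t) _ = _
      rw [Matrix.toEuclideanLin_apply]
      simp [Matrix.mulVec, Matrix.vecHead, Matrix.vecTail]
      try ring
  have hsub : {t : EuclideanSpace ℝ (Fin 2) | |v 0 * t 1 - v 1 * t 0| ≤ α ∧ ‖t‖ ≤ R}
      ⊆ f ⁻¹' {u : EuclideanSpace ℝ (Fin 2) | |u 0| ≤ α ∧ |u 1| ≤ ‖v‖ * R} := by
    rintro t ⟨h1, h2⟩
    refine ⟨?_, ?_⟩
    · rw [(hft t).1]; exact h1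
    · rw [(hft t).2]
      exact le_trans (inner_aux v t) (by nlinarith)
  calc volume {t : EuclideanSpace ℝ (Fin 2) | |v 0 * t 1 - v 1 * t 0| ≤ α ∧ ‖t‖ ≤ R}
      ≤ volume (f ⁻¹' {u : EuclideanSpace ℝ (Fin 2) | |u 0| ≤ α ∧ |u 1| ≤ ‖v‖ * R}) :=
        measure_mono hsub
    _ = ENNReal.ofReal |(LinearMap.det f)⁻¹| *
        volume {u : EuclideanSpace ℝ (Fin 2) | |u 0| ≤ α ∧ |u 1| ≤ ‖v‖ * R} :=
        Measure.addHaar_preimage_linearMap volume hdet0 _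
    _ = ENNReal.ofReal ((‖v‖ ^ 2)⁻¹) * (ENNReal.ofReal (2 * α) * ENNReal.ofReal (2 * (‖v‖ * R))) := by
        rw [vol_rect, hdet]
        congr 1
        rw [abs_inv, abs_neg, abs_of_nonneg (by positivity : (0:ℝ) ≤ ‖v‖ ^ 2)]
    _ ≤ ENNReal.ofReal (4 * α * R / ‖v‖) := by
        rw [← ENNReal.ofReal_mul (by positivity), ← ENNReal.ofReal_mul (by positivity)]
        apply ENNReal.ofReal_le_ofReal
        rw [div_eq_mul_inv]
        have : (‖v‖ ^ 2)⁻¹ * (2 * α * (2 * (‖v‖ * R))) = 4 * α * R * (‖v‖)⁻¹ := by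
          field_simp
          ring
        rw [this]

/-- The annulus `{x ∈ ℝ² : 2^(i-1) ≤ ‖x‖ < 2^i}`. -/
def Ann2 (i : ℤ) : Set (EuclideanSpace ℝ (Fin 2)) :=
  {x | (2 : ℝ) ^ (i - 1) ≤ ‖x‖ ∧ ‖x‖ < (2 : ℝ) ^ i}

lemma two_zpow_ofReal (n : ℤ) : ENNReal.ofReal ((2:ℝ) ^ n) = (2 : ℝ≥0∞) ^ n := by
  have h : ((2:ℝ) ^ n) = (((2:ℝ≥0) ^ n : ℝ≥0) : ℝ) := by push_cast; ring
  rw [h, ENNReal.ofReal_coe_nnreal, ENNReal.coe_zpow (by norm_num : (2:ℝ≥0) ≠ 0)]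
  norm_num

lemma main_half (α : ℝ) (hα : 0 < α) (i j : ℤ) (A B : Set (EuclideanSpace ℝ (Fin 2))) :
    (∫⁻ s, ∫⁻ t,
        ({q : EuclideanSpace ℝ (Fin 2) × EuclideanSpace ℝ (Fin 2) |
            |q.1 0 * q.2 1 - q.1 1 * q.2 0| ≤ α}.indicator (fun _ => (1 : ℝ≥0∞)) (s, t))
          * (A ∩ Ann2 i).indicator (fun _ => (1 : ℝ≥0∞)) s
          * (B ∩ Ann2 j).indicator (fun _ => (1 : ℝ≥0∞)) t)
      ≤ ENNReal.ofReal (8 * α) * ((2 : ℝ≥0∞) ^ (j - i) * volume (A ∩ Ann2 i)) := by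
  set K : Set (EuclideanSpace ℝ (Fin 2) × EuclideanSpace ℝ (Fin 2)) :=
    {q | |q.1 0 * q.2 1 - q.1 1 * q.2 0| ≤ α} with hK
  have key : ∀ s : EuclideanSpace ℝ (Fin 2),
      (∫⁻ t, K.indicator (fun _ => (1 : ℝ≥0∞)) (s, t)
          * (A ∩ Ann2 i).indicator (fun _ => (1 : ℝ≥0∞)) s
          * (B ∩ Ann2 j).indicator (fun _ => (1 : ℝ≥0∞)) t)
        ≤ (A ∩ Ann2 i).indicator
            (fun _ => ENNReal.ofReal (8 * α * (2:ℝ) ^ (j - i))) s := by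
    intro s
    by_cases hs : s ∈ A ∩ Ann2 i
    · simp only [indicator_of_mem hs, mul_one]
      have hsn : (2:ℝ) ^ (i - 1) ≤ ‖s‖ := hs.2.1
      have hsn0 : 0 < ‖s‖ := lt_of_lt_of_le (by positivity) hsn
      set S : Set (EuclideanSpace ℝ (Fin 2)) :=
        {t | |s 0 * t 1 - s 1 * t 0| ≤ α ∧ ‖t‖ ≤ (2:ℝ) ^ j} with hS
      calc (∫⁻ t, K.indicator (fun _ => (1 : ℝ≥0∞)) (s, t)
              * (B ∩ Ann2 j).indicator (fun _ => (1 : ℝ≥0∞)) t)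
          ≤ ∫⁻ t, S.indicator (fun _ => (1 : ℝ≥0∞)) t := by
            apply lintegral_mono
            intro t
            by_cases h1 : (s, t) ∈ K
            · by_cases h2 : t ∈ B ∩ Ann2 j
              · have hts : t ∈ S := ⟨h1, le_of_lt h2.2.2⟩
                simp [indicator_of_mem hts, indicator_of_mem h1, indicator_of_mem h2]
              · simp [indicator_of_notMem h2]
            · simp [indicator_of_notMem h1]
        _ ≤ volume S := lintegral_indicator_one_le S
        _ ≤ ENNReal.ofReal (4 * α * ((2:ℝ) ^ j) / ‖s‖) :=
            strip_vol s hsn0 α ((2:ℝ) ^ j) hα.le (by positivity)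
        _ ≤ ENNReal.ofReal (8 * α * (2:ℝ) ^ (j - i)) := by
            apply ENNReal.ofReal_le_ofReal
            rw [div_le_iff₀ hsn0]
            have h2 : (2:ℝ) ^ (j - i) * (2:ℝ) ^ (i - 1) = (2:ℝ) ^ j / 2 := by
              rw [div_eq_mul_inv, ← zpow_neg_one, ← zpow_add₀ (by norm_num : (2:ℝ) ≠ 0),
                ← zpow_add₀ (by norm_num : (2:ℝ) ≠ 0)]
              congr 1; ring
            calc 4 * α * (2:ℝ) ^ j = (8 * α * (2:ℝ) ^ (j-i))  * (2:ℝ) ^ (i-1) := by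
                  calc 4 * α * (2:ℝ) ^ j = 8 * α * ((2:ℝ) ^ j / 2) := by ring
                    _ = 8 * α * ((2:ℝ) ^ (j-i) * (2:ℝ) ^ (i-1)) := by rw [h2]
                    _ = (8 * α * (2:ℝ) ^ (j-i)) * (2:ℝ) ^ (i-1) := by ring
              _ ≤ (8 * α * (2:ℝ) ^ (j-i)) * ‖s‖ := by
                  apply mul_le_mul_of_nonneg_left hsn
                  positivity
    · simp [indicator_of_notMem hs]
  calc _ ≤ ∫⁻ s, (A ∩ Ann2 i).indicator
        (fun _ => ENNReal.ofReal (8 * α * (2:ℝ) ^ (j - i))) s := lintegral_mono key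
    _ ≤ ENNReal.ofReal (8 * α * (2:ℝ) ^ (j - i)) * volume (A ∩ Ann2 i) :=
        lintegral_indicator_const_le _ _
    _ = ENNReal.ofReal (8 * α) * ((2 : ℝ≥0∞) ^ (j - i) * volume (A ∩ Ann2 i)) := by
        rw [ENNReal.ofReal_mul (by positivity), two_zpow_ofReal, mul_assoc]

/-- annulus-localized determinant sublevel set bound in `ℝ²`. -/
theorem statement13 :
    ∃ C : ℝ, 0 ≤ C ∧ ∀ α : ℝ, 0 < α → ∀ i j : ℤ,
      ∀ E F : Set (EuclideanSpace ℝ (Fin 2)), MeasurableSet E → MeasurableSet F →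
      (∫⁻ s, ∫⁻ t,
          ({q : EuclideanSpace ℝ (Fin 2) × EuclideanSpace ℝ (Fin 2) |
              |q.1 0 * q.2 1 - q.1 1 * q.2 0| ≤ α}.indicator (fun _ => (1 : ℝ≥0∞)) (s, t))
            * (E ∩ Ann2 i).indicator (fun _ => (1 : ℝ≥0∞)) s
            * (F ∩ Ann2 j).indicator (fun _ => (1 : ℝ≥0∞)) t)
        ≤ ENNReal.ofReal (C * α) *
            min ((2 : ℝ≥0∞) ^ (i - j) * volume (F ∩ Ann2 j))
                ((2 : ℝ≥0∞) ^ (j - i) * volume (E ∩ Ann2 i)) := by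
  refine ⟨8, by norm_num, ?_⟩
  intro α hα i j E F hE hF
  set K : Set (EuclideanSpace ℝ (Fin 2) × EuclideanSpace ℝ (Fin 2)) :=
    {q | |q.1 0 * q.2 1 - q.1 1 * q.2 0| ≤ α} with hKdef
  have hAnn : ∀ k : ℤ, MeasurableSet (Ann2 k) := by
    intro k
    have : Ann2 k = (fun x : EuclideanSpace ℝ (Fin 2) => ‖x‖) ⁻¹'
        (Ico ((2:ℝ)^(k-1)) ((2:ℝ)^k)) := rfl
    rw [this]
    exact measurable_norm measurableSet_Ico
  have h0 : Measurable fun x : EuclideanSpace ℝ (Fin 2) => x 0 := (measurable_pi_apply 0).comp (WithLp.measurable_ofLp 2 _)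
  have h1 : Measurable fun x : EuclideanSpace ℝ (Fin 2) => x 1 := (measurable_pi_apply 1).comp (WithLp.measurable_ofLp 2 _)
  have hK : MeasurableSet K := by
    have hf : Measurable fun q : EuclideanSpace ℝ (Fin 2) × EuclideanSpace ℝ (Fin 2) =>
        |q.1 0 * q.2 1 - q.1 1 * q.2 0| :=
      (((h0.comp measurable_fst).mul (h1.comp measurable_snd)).sub
        ((h1.comp measurable_fst).mul (h0.comp measurable_snd))).abs
    exact hf measurableSet_Iic
  have hmeas : AEMeasurable
      (Function.uncurry fun s t : EuclideanSpace ℝ (Fin 2) =>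
        K.indicator (fun _ => (1 : ℝ≥0∞)) (s, t)
          * (E ∩ Ann2 i).indicator (fun _ => (1 : ℝ≥0∞)) s
          * (F ∩ Ann2 j).indicator (fun _ => (1 : ℝ≥0∞)) t)
      (volume.prod volume) := by
    refine Measurable.aemeasurable ?_
    exact ((measurable_const.indicator hK).mul
        (((measurable_const.indicator (hE.inter (hAnn i)))).comp measurable_fst)).mul
      ((measurable_const.indicator (hF.inter (hAnn j))).comp measurable_snd)
  have hswap := lintegral_lintegral_swap hmeas
  have hsym : ∀ t s : EuclideanSpace ℝ (Fin 2),
      K.indicator (fun _ => (1 : ℝ≥0∞)) (s, t)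
          * (E ∩ Ann2 i).indicator (fun _ => (1 : ℝ≥0∞)) s
          * (F ∩ Ann2 j).indicator (fun _ => (1 : ℝ≥0∞)) t
        = K.indicator (fun _ => (1 : ℝ≥0∞)) (t, s)
          * (F ∩ Ann2 j).indicator (fun _ => (1 : ℝ≥0∞)) t
          * (E ∩ Ann2 i).indicator (fun _ => (1 : ℝ≥0∞)) s := by
    intro t s
    have habs : |s 0 * t 1 - s 1 * t 0| = |t 0 * s 1 - t 1 * s 0| := by
      rw [abs_sub_comm]; ring_nf
    have hmem : (s, t) ∈ K ↔ (t, s) ∈ K := by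
      simp only [hKdef, Set.mem_setOf_eq]
      rw [habs]
    by_cases hm : (s, t) ∈ K
    · rw [indicator_of_mem hm, indicator_of_mem (hmem.mp hm)]; ring
    · rw [indicator_of_notMem hm, indicator_of_notMem (fun c => hm (hmem.mpr c))]; ring
  rcases le_total ((2 : ℝ≥0∞) ^ (i - j) * volume (F ∩ Ann2 j))
      ((2 : ℝ≥0∞) ^ (j - i) * volume (E ∩ Ann2 i)) with h | h
  · rw [min_eq_left h, hswap]
    calc (∫⁻ t, ∫⁻ s, K.indicator (fun _ => (1 : ℝ≥0∞)) (s, t)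
            * (E ∩ Ann2 i).indicator (fun _ => (1 : ℝ≥0∞)) s
            * (F ∩ Ann2 j).indicator (fun _ => (1 : ℝ≥0∞)) t)
        = ∫⁻ t, ∫⁻ s, K.indicator (fun _ => (1 : ℝ≥0∞)) (t, s)
            * (F ∩ Ann2 j).indicator (fun _ => (1 : ℝ≥0∞)) t
            * (E ∩ Ann2 i).indicator (fun _ => (1 : ℝ≥0∞)) s :=
          lintegral_congr fun t => lintegral_congr fun s => hsym t s
      _ ≤ ENNReal.ofReal (8 * α) * ((2 : ℝ≥0∞) ^ (i - j) * volume (F ∩ Ann2 j)) :=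
          main_half α hα j i F E
  · rw [min_eq_right h]
    exact main_half α hα i j E F
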